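/- Let E, F be symmetric Banach function spaces on I = (0,1) or (0,∞) with fundamental functions f_E and f_F. Then the fundamental function of the product space satisfies f_{E⊙F}(t) = f_E(t)·f_F(t) for all t ∈ I, i.e., ‖χ_{[0,t]}‖_{E⊙F} = ‖χ_{[0,t]}‖_E · ‖χ_{[0,t]}‖_F. -/

import Mathlib

open MeasureTheory

/-- A Banach ideal space on a measure space: a linear subspace of measurable
functions (mod null sets) with a complete lattice norm having the ideal property,
and a weak unit (saturation). -/
structure IdealSpace {α : Type*} [MeasurableSpace α] (μ : Measure α) where
  carrier : Set (α → ℝ)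
  norm : (α → ℝ) → ℝ
  zero_mem : (0 : α → ℝ) ∈ carrier
  add_mem : ∀ {f g : α → ℝ}, f ∈ carrier → g ∈ carrier → f + g ∈ carrier
  smul_mem : ∀ (c : ℝ) {f : α → ℝ}, f ∈ carrier → c • f ∈ carrier
  norm_nonneg : ∀ f, 0 ≤ norm f
  norm_eq_zero : ∀ f ∈ carrier, (norm f = 0 ↔ f =ᵐ[μ] 0)
  norm_add : ∀ f g, f ∈ carrier → g ∈ carrier → norm (f + g) ≤ norm f + norm g
  norm_smul : ∀ (c : ℝ) (f : α → ℝ), norm (c • f) = |c| * norm f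
  ideal_mem : ∀ {f g : α → ℝ}, g ∈ carrier → (∀ᵐ a ∂μ, |f a| ≤ |g a|) → f ∈ carrier
  ideal_norm : ∀ {f g : α → ℝ}, g ∈ carrier → (∀ᵐ a ∂μ, |f a| ≤ |g a|) → norm f ≤ norm g
  weak_unit : ∃ w ∈ carrier, ∀ᵐ a ∂μ, 0 < w a
  complete : ∀ x : ℕ → α → ℝ, (∀ n, x n ∈ carrier) →
    (∀ ε > 0, ∃ N, ∀ m ≥ N, ∀ n ≥ N, norm (x m - x n) < ε) →
    ∃ f ∈ carrier, Filter.Tendsto (fun n => norm (x n - f)) Filter.atTop (nhds 0)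

variable {α : Type*} [MeasurableSpace α] {μ : Measure α}

/-- The pointwise product space E ⊙ F. -/
def prodSet (E F : IdealSpace μ) : Set (α → ℝ) :=
  {z | ∃ x ∈ E.carrier, ∃ y ∈ F.carrier, z =ᵐ[μ] x * y}

/-- The quasi-norm of the pointwise product space E ⊙ F. -/
noncomputable def prodNorm (E F : IdealSpace μ) (z : α → ℝ) : ℝ :=
  sInf {r | ∃ x ∈ E.carrier, ∃ y ∈ F.carrier, z =ᵐ[μ] x * y ∧ r = E.norm x * F.norm y}

/-- A rearrangement invariant (symmetric) space: equimeasurable functions belong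
together and have equal norms. -/
def IsSymmetric {μ : Measure ℝ} (E : IdealSpace μ) : Prop :=
  ∀ f g : ℝ → ℝ, f ∈ E.carrier →
    (∀ lam : ℝ, 0 < lam → μ {a | lam < |f a|} = μ {a | lam < |g a|}) →
    g ∈ E.carrier ∧ E.norm g = E.norm f

open Set Filter
open scoped ENNReal

namespace PF


open MeasureTheory Set Filter


lemma mod_id1 (n k b : ℕ) (hn : 0 < n) (hb : b < n) :
    ((b + (n - k % n)) % n + k) % n = b := by
  have hq := Nat.div_add_mod k n
  have hr : k % n < n := Nat.mod_lt _ hn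
  rw [Nat.mod_add_mod]
  have h2 : b + (n - k % n) + k = n * (k / n) + n + b := by omega
  rw [h2]
  have h3 : n * (k / n) + n + b = n * (k / n + 1) + b := by ring
  rw [h3, Nat.mul_add_mod]
  exact Nat.mod_eq_of_lt hb

lemma mod_id2 (n k a : ℕ) (hn : 0 < n) (ha : a < n) :
    ((a + k) % n + (n - k % n)) % n = a := by
  have hq := Nat.div_add_mod k n
  have hr : k % n < n := Nat.mod_lt _ hn
  rw [Nat.mod_add_mod]
  have h2 : a + k + (n - k % n) = n * (k / n) + n + a := by omega
  rw [h2]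
  have h3 : n * (k / n) + n + a = n * (k / n + 1) + a := by ring
  rw [h3, Nat.mul_add_mod]
  exact Nat.mod_eq_of_lt ha

lemma card_shift (n k : ℕ) (hn : 0 < n) (p : ℕ → Prop) [DecidablePred p] :
    (Finset.filter (fun i => p ((i + k) % n)) (Finset.range n)).card
      = (Finset.filter p (Finset.range n)).card := by
  apply Finset.card_nbij' (i := fun i => (i + k) % n)
    (j := fun j => (j + (n - k % n)) % n)
  · intro a ha
    simp only [Finset.mem_coe, Finset.mem_filter, Finset.mem_range] at ha ⊢
    exact ⟨Nat.mod_lt _ hn, ha.2⟩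
  · intro b hb
    simp only [Finset.mem_coe, Finset.mem_filter, Finset.mem_range] at hb ⊢
    refine ⟨Nat.mod_lt _ hn, ?_⟩
    rw [mod_id1 n k b hn hb.1]
    exact hb.2
  · intro a ha
    simp only [Finset.mem_coe, Finset.mem_filter, Finset.mem_range] at ha
    exact mod_id2 n k a hn ha.1
  · intro b hb
    simp only [Finset.mem_coe, Finset.mem_filter, Finset.mem_range] at hb
    exact mod_id1 n k b hn hb.1

lemma sum_shift (n k : ℕ) (hn : 0 < n) (c : ℕ → ℝ) :
    ∑ i ∈ Finset.range n, c ((i + k) % n) = ∑ i ∈ Finset.range n, c i := by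
  apply Finset.sum_nbij' (i := fun i => (i + k) % n)
    (j := fun j => (j + (n - k % n)) % n)
  · intro a ha
    simp only [Finset.mem_range] at ha ⊢
    exact Nat.mod_lt _ hn
  · intro b hb
    simp only [Finset.mem_range] at hb ⊢
    exact Nat.mod_lt _ hn
  · intro a ha
    simp only [Finset.mem_range] at ha
    exact mod_id2 n k a hn ha
  · intro b hb
    simp only [Finset.mem_range] at hb
    exact mod_id1 n k b hn hb
  · intro a ha
    rfl


open MeasureTheory Set Filter
open scoped ENNReal


noncomputable def dst (μ : Measure ℝ) (u : ℝ → ℝ) (l : ℝ) : ℝ≥0∞ := μ {a | l < u a}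

lemma dst_anti (μ : Measure ℝ) (u : ℝ → ℝ) : Antitone (dst μ u) :=
  fun _ _ h => measure_mono (fun _ ha => lt_of_le_of_lt h ha)

lemma dst_rc (μ : Measure ℝ) (u : ℝ → ℝ) (l : ℝ) :
    dst μ u l = ⨆ k : ℕ, dst μ u (l + 1 / (k + 1)) := by
  have hset : {a | l < u a} = ⋃ k : ℕ, {a | l + 1 / ((k : ℝ) + 1) < u a} := by
    ext a
    simp only [mem_setOf_eq, mem_iUnion]
    constructor
    · intro h
      obtain ⟨k, hk⟩ := exists_nat_one_div_lt (sub_pos.mpr h)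
      exact ⟨k, by push_cast at hk ⊢; linarith⟩
    · rintro ⟨k, hk⟩
      have h1 : (0:ℝ) < 1 / ((k:ℝ) + 1) := by positivity
      linarith
  have hmono : Monotone (fun k : ℕ => {a | l + 1 / ((k : ℝ) + 1) < u a}) := by
    intro k m hkm a ha
    simp only [mem_setOf_eq] at ha ⊢
    have h1 : 1 / ((m:ℝ) + 1) ≤ 1 / ((k:ℝ) + 1) := by
      apply one_div_le_one_div_of_le
      · positivity
      · push_cast; exact_mod_cast by exact_mod_cast add_le_add_left (Nat.cast_le.mpr hkm) 1
    linarith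
  rw [dst, hset, (hmono.directed_le).measure_iUnion]
  rfl

/-- decreasing rearrangement w.r.t. the (outer) distribution -/
noncomputable def rear (μ : Measure ℝ) (t : ℝ) (u : ℝ → ℝ) (s : ℝ) : ℝ :=
  if 0 < s ∧ s < t then sInf {l | 0 ≤ l ∧ dst μ u l ≤ ENNReal.ofReal s} else 0

section rearlem

variable {μ : Measure ℝ} {t : ℝ} {u : ℝ → ℝ}
  (Hb : ∀ s, 0 < s → s < t → ∃ l, 0 ≤ l ∧ dst μ u l ≤ ENNReal.ofReal s)

lemma rearM_bdd (s : ℝ) : BddBelow {l | 0 ≤ l ∧ dst μ u l ≤ ENNReal.ofReal s} :=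
  ⟨0, fun _ hl => hl.1⟩

include Hb

lemma rear_nonneg (s : ℝ) : 0 ≤ rear μ t u s := by
  rw [rear]
  split
  · next h =>
    exact le_csInf (Hb s h.1 h.2) (fun l hl => hl.1)
  · exact le_refl 0

lemma rear_le_of {s l : ℝ} (hs0 : 0 < s) (hst : s < t) (hl0 : 0 ≤ l)
    (h : dst μ u l ≤ ENNReal.ofReal s) : rear μ t u s ≤ l := by
  rw [rear, if_pos ⟨hs0, hst⟩]
  exact csInf_le (rearM_bdd s) ⟨hl0, h⟩

lemma rear_lt_imp {s α : ℝ} (hs0 : 0 < s) (hst : s < t)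
    (h : rear μ t u s < α) : dst μ u α ≤ ENNReal.ofReal s := by
  rw [rear, if_pos ⟨hs0, hst⟩] at h
  obtain ⟨l, hl, hlα⟩ := exists_lt_of_csInf_lt (Hb s hs0 hst) h
  exact le_trans (dst_anti μ u hlα.le) hl.2

lemma lt_rear {s lam : ℝ} (hs0 : 0 < s) (hst : s < t) (hlam : 0 ≤ lam)
    (h : ENNReal.ofReal s < dst μ u lam) : lam < rear μ t u s := by
  rw [rear, if_pos ⟨hs0, hst⟩]
  set M := {l | 0 ≤ l ∧ dst μ u l ≤ ENNReal.ofReal s} with hM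
  have hne : M.Nonempty := Hb s hs0 hst
  have hlb : ∀ l ∈ M, lam ≤ l := by
    intro l hl
    by_contra hc
    push_neg at hc
    exact absurd (le_trans (dst_anti μ u hc.le) hl.2) h.not_ge
  have h1 : lam ≤ sInf M := le_csInf hne hlb
  rcases lt_or_eq_of_le h1 with h2 | h2
  · exact h2
  · exfalso
    have hk : ∀ k : ℕ, dst μ u (lam + 1 / ((k:ℝ) + 1)) ≤ ENNReal.ofReal s := by
      intro k
      have hlt : sInf M < lam + 1 / ((k:ℝ) + 1) := by
        rw [← h2]
        have : (0:ℝ) < 1 / ((k:ℝ)+1) := by positivity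
        linarith
      obtain ⟨l, hlM, hlk⟩ := exists_lt_of_csInf_lt hne hlt
      exact le_trans (dst_anti μ u hlk.le) hlM.2
    have := (dst_rc μ u lam).le.trans (iSup_le hk)
    exact absurd this h.not_ge

lemma rear_anti {s s' : ℝ} (h0 : 0 < s) (hss : s ≤ s') (h2 : s' ≤ t) :
    rear μ t u s' ≤ rear μ t u s := by
  rcases lt_or_ge s' t with hlt | hge
  · rw [rear, if_pos ⟨lt_of_lt_of_le h0 hss, hlt⟩, rear, if_pos ⟨h0, lt_of_le_of_lt hss hlt⟩]
    apply csInf_le_csInf (rearM_bdd s') (Hb s h0 (lt_of_le_of_lt hss hlt))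
    intro l hl
    exact ⟨hl.1, le_trans hl.2 (ENNReal.ofReal_le_ofReal hss)⟩
  · have hnot : ¬ (0 < s' ∧ s' < t) := by
      rintro ⟨_, hc⟩
      exact absurd hc (not_lt_of_ge hge)
    rw [rear, if_neg hnot]
    exact rear_nonneg Hb s

end rearlem


section meas

variable {I : Set ℝ} {μ : Measure ℝ} {t : ℝ}

lemma meas_sub (hμ : μ = volume.restrict I) {S : Set ℝ} (hS : MeasurableSet S)
    (hsubI : S ⊆ I) : μ S = volume S := by
  subst hμ
  rw [Measure.restrict_apply hS, inter_eq_self_of_subset_left hsubI]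

lemma meas_Ioc (hμ : μ = volume.restrict I) (hsub : Ioc 0 t ⊆ I) {a b : ℝ}
    (h1 : 0 ≤ a) (h2 : b ≤ t) : μ (Ioc a b) = ENNReal.ofReal (b - a) := by
  rcases le_or_gt b a with h | h
  · rw [Ioc_eq_empty (not_lt_of_ge h), measure_empty, ENNReal.ofReal_eq_zero.mpr (by linarith)]
  · rw [meas_sub hμ measurableSet_Ioc (fun x hx => hsub ⟨lt_of_le_of_lt h1 hx.1, le_trans hx.2 h2⟩),
      Real.volume_Ioc]

lemma meas_Ioo (hμ : μ = volume.restrict I) (hsub : Ioc 0 t ⊆ I) {b : ℝ}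
    (h2 : b ≤ t) : μ (Ioo 0 b) = ENNReal.ofReal b := by
  rcases le_or_gt b 0 with h | h
  · rw [Ioo_eq_empty (not_lt_of_ge h), measure_empty,
      eq_comm, ENNReal.ofReal_eq_zero.mpr (by linarith)]
  · rw [meas_sub hμ measurableSet_Ioo (fun x hx => hsub ⟨hx.1, le_trans hx.2.le h2⟩),
      Real.volume_Ioo, sub_zero]

variable {u : ℝ → ℝ}

lemma dst_le_t (hμ : μ = volume.restrict I) (hsub : Ioc 0 t ⊆ I) (ht0 : 0 < t)
    (husupp : ∀ a, a ∉ Ioc 0 t → u a = 0) {lam : ℝ} (hlam : 0 < lam) :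
    dst μ u lam ≤ ENNReal.ofReal t := by
  have hss : {a | lam < u a} ⊆ Ioc 0 t := by
    intro a ha
    by_contra h
    rw [mem_setOf_eq, husupp a h] at ha
    linarith
  calc dst μ u lam ≤ μ (Ioc 0 t) := measure_mono hss
  _ = ENNReal.ofReal t := by rw [meas_Ioc hμ hsub le_rfl le_rfl, sub_zero]

lemma dst_ne_top (hμ : μ = volume.restrict I) (hsub : Ioc 0 t ⊆ I) (ht0 : 0 < t)
    (husupp : ∀ a, a ∉ Ioc 0 t → u a = 0) {lam : ℝ} (hlam : 0 < lam) :
    dst μ u lam ≠ ⊤ :=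
  ne_top_of_le_ne_top ENNReal.ofReal_ne_top (dst_le_t hμ hsub ht0 husupp hlam)

/-- the rearrangement is equidistributed with `u`. -/
lemma rear_equi (hμ : μ = volume.restrict I) (hsub : Ioc 0 t ⊆ I) (ht0 : 0 < t)
    (hu0 : ∀ a, 0 ≤ u a) (husupp : ∀ a, a ∉ Ioc 0 t → u a = 0)
    (Hb : ∀ s, 0 < s → s < t → ∃ l, 0 ≤ l ∧ dst μ u l ≤ ENNReal.ofReal s) :
    ∀ lam : ℝ, 0 < lam → μ {a | lam < |u a|} = μ {a | lam < |rear μ t u a|} := by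
  intro lam hlam
  have h1 : {a | lam < |u a|} = {a | lam < u a} := by
    ext a; rw [mem_setOf_eq, mem_setOf_eq, abs_of_nonneg (hu0 a)]
  have h2 : {a | lam < |rear μ t u a|} = {a | lam < rear μ t u a} := by
    ext a; rw [mem_setOf_eq, mem_setOf_eq, abs_of_nonneg (rear_nonneg Hb a)]
  rw [h1, h2]
  set L := dst μ u lam with hL
  have hLt : L ≤ ENNReal.ofReal t := dst_le_t hμ hsub ht0 husupp hlam
  have hLfin : L ≠ ⊤ := ne_top_of_le_ne_top ENNReal.ofReal_ne_top hLt
  set l := L.toReal with hl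
  have hl0 : 0 ≤ l := ENNReal.toReal_nonneg
  have hlt : l ≤ t := ENNReal.toReal_le_of_le_ofReal ht0.le hLt
  have hLl : ENNReal.ofReal l = L := ENNReal.ofReal_toReal hLfin
  have hset : {s | lam < rear μ t u s} = Ioo 0 l := by
    ext s
    simp only [mem_setOf_eq, mem_Ioo]
    constructor
    · intro hs
      have hst : 0 < s ∧ s < t := by
        by_contra h
        rw [rear, if_neg h] at hs
        linarith
      have hns : ¬ (dst μ u lam ≤ ENNReal.ofReal s) := by
        intro hc
        exact absurd (rear_le_of Hb hst.1 hst.2 hlam.le hc) (not_le_of_gt hs)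
      have hlt2 : ENNReal.ofReal s < ENNReal.ofReal l := by
        rw [hLl, hL]; exact lt_of_not_ge hns
      exact ⟨hst.1, (ENNReal.ofReal_lt_ofReal_iff_of_nonneg hst.1.le).mp hlt2⟩
    · rintro ⟨hs0, hsl⟩
      have hst : s < t := lt_of_lt_of_le hsl hlt
      apply lt_rear Hb hs0 hst hlam.le
      have h5 : ENNReal.ofReal s < ENNReal.ofReal l :=
        (ENNReal.ofReal_lt_ofReal_iff_of_nonneg hs0.le).mpr hsl
      rw [hLl, hL] at h5
      exact h5
  rw [hset, meas_Ioo hμ hsub hlt, hLl]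
  rfl

end meas

section step

variable {t : ℝ} {n : ℕ}

/-- index of the cell of the uniform partition of `(0,t]` into `n` pieces containing `a` -/
noncomputable def idx (t : ℝ) (n : ℕ) (a : ℝ) : ℕ := ⌈a / (t / n)⌉₊ - 1

/-- step function on the uniform partition -/
noncomputable def stepf (t : ℝ) (n : ℕ) (c : ℕ → ℝ) : ℝ → ℝ :=
  (Ioc 0 t).indicator (fun a => c (idx t n a))

lemma idx_lt (ht0 : 0 < t) (hn : 0 < n) {a : ℝ} (ha : a ∈ Ioc 0 t) : idx t n a < n := by
  have hδ : 0 < t / n := by positivity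
  have h1 : 1 ≤ ⌈a / (t / n)⌉₊ := Nat.one_le_ceil_iff.mpr (div_pos ha.1 hδ)
  have h2 : ⌈a / (t / n)⌉₊ ≤ n := by
    apply Nat.ceil_le.mpr
    rw [div_le_iff₀ hδ]
    calc a ≤ t := ha.2
    _ = (n : ℝ) * (t / n) := by field_simp
  rw [idx]; omega

lemma mem_cell (ht0 : 0 < t) (hn : 0 < n) {a : ℝ} (ha : a ∈ Ioc 0 t) :
    (idx t n a : ℝ) * (t / n) < a ∧ a ≤ ((idx t n a : ℝ) + 1) * (t / n) := by
  have hδ : 0 < t / n := by positivity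
  have h1 : 1 ≤ ⌈a / (t / n)⌉₊ := Nat.one_le_ceil_iff.mpr (div_pos ha.1 hδ)
  have hcast : ((idx t n a : ℕ) : ℝ) + 1 = (⌈a / (t / n)⌉₊ : ℝ) := by
    rw [idx]
    push_cast [Nat.cast_sub h1]
    ring
  constructor
  · have h3 : ((idx t n a : ℕ) : ℝ) < a / (t / n) := by
      have := Nat.lt_ceil.mp (show idx t n a < ⌈a / (t / n)⌉₊ by rw [idx]; omega)
      exact this
    calc (idx t n a : ℝ) * (t / n) < (a / (t / n)) * (t / n) := by
          exact mul_lt_mul_of_pos_right h3 hδ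
    _ = a := by field_simp
  · have h4 : a / (t / n) ≤ (⌈a / (t / n)⌉₊ : ℝ) := Nat.le_ceil _
    rw [hcast]
    calc a = (a / (t / n)) * (t / n) := by field_simp
    _ ≤ (⌈a / (t / n)⌉₊ : ℝ) * (t / n) := mul_le_mul_of_nonneg_right h4 hδ.le

lemma idx_eq (ht0 : 0 < t) (hn : 0 < n) {i : ℕ} {a : ℝ}
    (hai : (i : ℝ) * (t / n) < a) (ha2 : a ≤ ((i : ℝ) + 1) * (t / n)) :
    idx t n a = i := by
  have hδ : 0 < t / n := by positivity
  have h1 : (i : ℝ) < a / (t / n) := by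
    rw [lt_div_iff₀ hδ]; exact hai
  have h2 : a / (t / n) ≤ (i : ℝ) + 1 := by
    rw [div_le_iff₀ hδ]; exact ha2
  have : ⌈a / (t / n)⌉₊ = i + 1 := by
    rw [Nat.ceil_eq_iff (Nat.succ_ne_zero i)]
    constructor
    · simpa using h1
    · push_cast; exact h2
  rw [idx, this]; omega

lemma cell_subset (ht0 : 0 < t) (hn : 0 < n) {i : ℕ} (hi : i < n) :
    Ioc ((i : ℝ) * (t / n)) (((i : ℝ) + 1) * (t / n)) ⊆ Ioc 0 t := by
  have hδ : 0 < t / n := by positivity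
  intro a ha
  constructor
  · have : 0 ≤ (i : ℝ) * (t / n) := by positivity
    linarith [ha.1]
  · calc a ≤ ((i : ℝ) + 1) * (t / n) := ha.2
    _ ≤ (n : ℝ) * (t / n) := by
        apply mul_le_mul_of_nonneg_right _ hδ.le
        have : (i : ℝ) + 1 ≤ (n : ℝ) := by exact_mod_cast Nat.succ_le_of_lt hi
        exact this
    _ = t := by field_simp

end step


section cyclic

variable {I : Set ℝ} {μ : Measure ℝ} {t : ℝ} {n : ℕ}

lemma stepf_nonneg {c : ℕ → ℝ} (hc0 : ∀ i, 0 ≤ c i) (a : ℝ) : 0 ≤ stepf t n c a := by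
  rw [stepf]
  by_cases ha : a ∈ Ioc 0 t
  · rw [indicator_of_mem ha]; exact hc0 _
  · rw [indicator_of_notMem ha]

lemma stepf_dist (hμ : μ = volume.restrict I) (hsub : Ioc 0 t ⊆ I) (ht0 : 0 < t)
    (hn : 0 < n) {c : ℕ → ℝ} (hc0 : ∀ i, 0 ≤ c i) {lam : ℝ} (hlam : 0 < lam) :
    μ {a | lam < |stepf t n c a|}
      = (Finset.filter (fun i => lam < c i) (Finset.range n)).card • ENNReal.ofReal (t / n) := by
  classical
  have hδ : 0 < t / n := by positivity
  have habs : ∀ a, |stepf t n c a| = stepf t n c a := fun a => abs_of_nonneg (stepf_nonneg hc0 a)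
  have hset : {a | lam < |stepf t n c a|}
      = ⋃ i ∈ Finset.filter (fun i => lam < c i) (Finset.range n),
          Ioc ((i : ℝ) * (t / n)) (((i : ℝ) + 1) * (t / n)) := by
    ext a
    simp only [mem_setOf_eq, mem_iUnion, Finset.mem_filter, Finset.mem_range, exists_prop]
    rw [habs]
    constructor
    · intro h
      have ha : a ∈ Ioc 0 t := by
        by_contra hna
        rw [stepf, indicator_of_notMem hna] at h
        linarith
      rw [stepf, indicator_of_mem ha] at h
      exact ⟨idx t n a, ⟨idx_lt ht0 hn ha, h⟩, mem_cell ht0 hn ha⟩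
    · rintro ⟨i, ⟨hi, hci⟩, hmem⟩
      have ha : a ∈ Ioc 0 t := cell_subset ht0 hn hi hmem
      rw [stepf, indicator_of_mem ha, idx_eq ht0 hn hmem.1 hmem.2]
      exact hci
  have hcell : ∀ i ∈ Finset.filter (fun i => lam < c i) (Finset.range n),
      μ (Ioc ((i:ℝ)*(t/n)) (((i:ℝ)+1)*(t/n))) = ENNReal.ofReal (t/n) := by
    intro i hi
    have hin : i < n := Finset.mem_range.mp (Finset.mem_filter.mp hi).1
    have hub : ((i:ℝ)+1)*(t/n) ≤ t := by
      calc ((i:ℝ)+1)*(t/n) ≤ (n:ℝ)*(t/n) := by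
            apply mul_le_mul_of_nonneg_right _ hδ.le
            exact_mod_cast Nat.succ_le_of_lt hin
      _ = t := by field_simp
    rw [meas_Ioc hμ hsub (by positivity) hub]
    congr 1; ring
  have hdisj : (↑(Finset.filter (fun i => lam < c i) (Finset.range n)) : Set ℕ).PairwiseDisjoint
      (fun i : ℕ => Ioc ((i:ℝ)*(t/n)) (((i:ℝ)+1)*(t/n))) := by
    intro i _ j _ hij
    have key : ∀ p q : ℕ, p < q →
        Disjoint (Ioc ((p:ℝ)*(t/n)) (((p:ℝ)+1)*(t/n))) (Ioc ((q:ℝ)*(t/n)) (((q:ℝ)+1)*(t/n))) := by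
      intro p q hpq
      apply Set.Ioc_disjoint_Ioc.mpr
      have h1 : ((p:ℝ)+1) ≤ (q:ℝ) := by exact_mod_cast hpq
      calc min (((p:ℝ)+1)*(t/n)) (((q:ℝ)+1)*(t/n)) ≤ ((p:ℝ)+1)*(t/n) := min_le_left _ _
      _ ≤ (q:ℝ)*(t/n) := mul_le_mul_of_nonneg_right h1 hδ.le
      _ ≤ max ((p:ℝ)*(t/n)) ((q:ℝ)*(t/n)) := le_max_right _ _
    rcases hij.lt_or_gt with h | h
    · exact key i j h
    · exact (key j i h).symm
  rw [hset, measure_biUnion_finset hdisj (fun i _ => measurableSet_Ioc),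
     Finset.sum_congr rfl hcell, Finset.sum_const]

end cyclic


section cyclic2

variable {I : Set ℝ} {μ : Measure ℝ} {t : ℝ} {n : ℕ}

lemma stepf_shift_sum (ht0 : 0 < t) (hn : 0 < n) (c : ℕ → ℝ) :
    (∑ k ∈ Finset.range n, stepf t n (fun i => c ((i + k) % n)))
      = (∑ i ∈ Finset.range n, c i) • (Ioc 0 t).indicator (fun _ => (1:ℝ)) := by
  funext a
  rw [Finset.sum_apply]
  by_cases ha : a ∈ Ioc 0 t
  · have h1 : ∀ k, stepf t n (fun i => c ((i + k) % n)) a = c ((idx t n a + k) % n) := by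
      intro k
      rw [stepf, indicator_of_mem ha]
    rw [Finset.sum_congr rfl (fun k _ => h1 k), Pi.smul_apply, indicator_of_mem ha,
      smul_eq_mul, mul_one]
    rw [Finset.sum_congr rfl (fun k _ => by rw [Nat.add_comm (idx t n a) k])]
    exact sum_shift n (idx t n a) hn c
  · have h1 : ∀ k, stepf t n (fun i => c ((i + k) % n)) a = 0 := by
      intro k
      rw [stepf, indicator_of_notMem ha]
    rw [Finset.sum_congr rfl (fun k _ => h1 k), Pi.smul_apply, indicator_of_notMem ha,
      smul_eq_mul, mul_zero, Finset.sum_const, smul_zero]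

lemma norm_zero' (E : IdealSpace μ) : E.norm 0 = 0 :=
  (E.norm_eq_zero 0 E.zero_mem).mpr (Filter.EventuallyEq.refl _ _)

lemma sum_carrier_norm (E : IdealSpace μ) (s : Finset ℕ) (f : ℕ → ℝ → ℝ)
    (hf : ∀ k ∈ s, f k ∈ E.carrier) :
    (∑ k ∈ s, f k) ∈ E.carrier ∧ E.norm (∑ k ∈ s, f k) ≤ ∑ k ∈ s, E.norm (f k) := by
  classical
  induction s using Finset.induction_on with
  | empty => simpa using ⟨E.zero_mem, le_of_eq (norm_zero' E)⟩
  | insert b s2 hni ih =>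
    have hb : f b ∈ E.carrier := hf b (Finset.mem_insert_self b s2)
    have hrest := ih (fun k hk => hf k (Finset.mem_insert_of_mem hk))
    rw [Finset.sum_insert hni, Finset.sum_insert hni]
    refine ⟨E.add_mem hb hrest.1, ?_⟩
    calc E.norm (f b + ∑ k ∈ s2, f k) ≤ E.norm (f b) + E.norm (∑ k ∈ s2, f k) :=
          E.norm_add _ _ hb hrest.1
    _ ≤ E.norm (f b) + ∑ k ∈ s2, E.norm (f k) := by linarith [hrest.2]

/-- key cyclic-shift estimate: the fundamental function times the mean of a
nonnegative step function minorant is at most the norm. -/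
lemma cyclic (hμ : μ = volume.restrict I) (hsub : Ioc 0 t ⊆ I) (ht0 : 0 < t)
    (E : IdealSpace μ) (hE : IsSymmetric E)
    (hχ : (Ioc 0 t).indicator (fun _ => (1:ℝ)) ∈ E.carrier)
    {g : ℝ → ℝ} (hg : g ∈ E.carrier) (c : ℕ → ℝ) (hc0 : ∀ i, 0 ≤ c i)
    (hn : 0 < n) (hdom : ∀ a, stepf t n c a ≤ |g a|) :
    E.norm ((Ioc 0 t).indicator (fun _ => (1:ℝ))) * (∑ i ∈ Finset.range n, c i)
      ≤ (n : ℝ) * E.norm g := by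
  classical
  set w : ℕ → ℝ → ℝ := fun k => stepf t n (fun i => c ((i + k) % n)) with hw
  have hw0 : w 0 = stepf t n c := by
    funext a
    by_cases ha : a ∈ Ioc 0 t
    · rw [hw]
      simp only [stepf, indicator_of_mem ha]
      rw [Nat.add_zero, Nat.mod_eq_of_lt (idx_lt ht0 hn ha)]
    · simp only [hw, stepf, indicator_of_notMem ha]
  have habs : ∀ a, |stepf t n c a| ≤ |g a| := by
    intro a
    rw [abs_of_nonneg (stepf_nonneg hc0 a)]
    exact hdom a
  have hw0mem : w 0 ∈ E.carrier := by
    rw [hw0]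
    exact E.ideal_mem hg (Filter.Eventually.of_forall habs)
  have hwk : ∀ k, w k ∈ E.carrier ∧ E.norm (w k) = E.norm (w 0) := by
    intro k
    apply hE (w 0) (w k) hw0mem
    intro lam hlam
    have hc0' : ∀ i, 0 ≤ c ((i + k) % n) := fun i => hc0 _
    have h1 : μ {a | lam < |w k a|}
        = (Finset.filter (fun i => lam < c ((i + k) % n)) (Finset.range n)).card
            • ENNReal.ofReal (t / n) := stepf_dist hμ hsub ht0 hn hc0' hlam
    have h2 : μ {a | lam < |w 0 a|}
        = (Finset.filter (fun i => lam < c i) (Finset.range n)).card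
            • ENNReal.ofReal (t / n) := by
      rw [hw0]
      exact stepf_dist hμ hsub ht0 hn hc0 hlam
    rw [h1, h2, card_shift n k hn (fun i => lam < c i)]
  have hsum : (∑ k ∈ Finset.range n, w k)
      = (∑ i ∈ Finset.range n, c i) • (Ioc 0 t).indicator (fun _ => (1:ℝ)) :=
    stepf_shift_sum ht0 hn c
  have hnorm1 := (sum_carrier_norm E (Finset.range n) w (fun k _ => (hwk k).1)).2
  rw [hsum, E.norm_smul] at hnorm1
  have hcs : 0 ≤ ∑ i ∈ Finset.range n, c i := Finset.sum_nonneg (fun i _ => hc0 i)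
  rw [abs_of_nonneg hcs] at hnorm1
  have hwg : E.norm (w 0) ≤ E.norm g := by
    rw [hw0]
    exact E.ideal_norm hg (Filter.Eventually.of_forall habs)
  have h3 : ∑ k ∈ Finset.range n, E.norm (w k) = (n : ℝ) * E.norm (w 0) := by
    rw [Finset.sum_congr rfl (fun k _ => (hwk k).2), Finset.sum_const, Finset.card_range,
      nsmul_eq_mul]
  rw [h3] at hnorm1
  calc E.norm ((Ioc 0 t).indicator (fun _ => (1:ℝ))) * (∑ i ∈ Finset.range n, c i)
      = (∑ i ∈ Finset.range n, c i) * E.norm ((Ioc 0 t).indicator (fun _ => (1:ℝ))) := by ring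
  _ ≤ (n : ℝ) * E.norm (w 0) := hnorm1
  _ ≤ (n : ℝ) * E.norm g := by
      apply mul_le_mul_of_nonneg_left hwg
      exact_mod_cast Nat.zero_le n

end cyclic2


section level

variable {I : Set ℝ} {μ : Measure ℝ} {t : ℝ}

lemma indicator_mem (E : IdealSpace μ)
    (hχt : (Ioc 0 t).indicator (fun _ => (1:ℝ)) ∈ E.carrier) {s : ℝ} (hs : s ≤ t) :
    (Ioc 0 s).indicator (fun _ => (1:ℝ)) ∈ E.carrier := by
  apply E.ideal_mem hχt
  apply Filter.Eventually.of_forall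
  intro a
  by_cases ha : a ∈ Ioc 0 s
  · rw [indicator_of_mem ha, indicator_of_mem (show a ∈ Ioc 0 t from ⟨ha.1, le_trans ha.2 hs⟩)]
  · rw [indicator_of_notMem ha, abs_zero]
    exact abs_nonneg _

lemma indicator_norm_mono (E : IdealSpace μ)
    {s s' : ℝ} (hss : s ≤ s')
    (hmem : (Ioc 0 s').indicator (fun _ => (1:ℝ)) ∈ E.carrier) :
    E.norm ((Ioc 0 s).indicator (fun _ => (1:ℝ)))
      ≤ E.norm ((Ioc 0 s').indicator (fun _ => (1:ℝ))) := by
  apply E.ideal_norm hmem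
  apply Filter.Eventually.of_forall
  intro a
  by_cases ha : a ∈ Ioc 0 s
  · rw [indicator_of_mem ha, indicator_of_mem (show a ∈ Ioc 0 s' from ⟨ha.1, le_trans ha.2 hss⟩)]
  · rw [indicator_of_notMem ha, abs_zero]
    exact abs_nonneg _

lemma phi_pos (hμ : μ = volume.restrict I) (hsub : Ioc 0 t ⊆ I) (E : IdealSpace μ)
    {s : ℝ} (hs0 : 0 < s) (hst : s ≤ t)
    (hmem : (Ioc 0 s).indicator (fun _ => (1:ℝ)) ∈ E.carrier) :
    0 < E.norm ((Ioc 0 s).indicator (fun _ => (1:ℝ))) := by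
  rcases lt_or_eq_of_le (E.norm_nonneg ((Ioc 0 s).indicator (fun _ => (1:ℝ)))) with h | h
  · exact h
  · exfalso
    have h0 : (Ioc 0 s).indicator (fun _ => (1:ℝ)) =ᵐ[μ] 0 :=
      (E.norm_eq_zero _ hmem).mp h.symm
    have h1 : μ {a | ¬ ((Ioc 0 s).indicator (fun _ => (1:ℝ)) a = (0 : ℝ → ℝ) a)} = 0 :=
      h0
    have h2 : Ioc 0 s ⊆ {a | ¬ ((Ioc 0 s).indicator (fun _ => (1:ℝ)) a = (0 : ℝ → ℝ) a)} := by
      intro a ha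
      simp only [mem_setOf_eq, indicator_of_mem ha, Pi.zero_apply]
      norm_num
    have h3 : μ (Ioc 0 s) = 0 := le_antisymm (h1 ▸ measure_mono h2) (zero_le)
    rw [meas_Ioc hμ hsub le_rfl hst, sub_zero] at h3
    exact absurd h3 (ENNReal.ofReal_pos.mpr hs0).ne'

lemma level (hμ : μ = volume.restrict I) (hsub : Ioc 0 t ⊆ I) (ht0 : 0 < t)
    (E : IdealSpace μ) (hE : IsSymmetric E)
    (hχt : (Ioc 0 t).indicator (fun _ => (1:ℝ)) ∈ E.carrier)
    {u : ℝ → ℝ} (humem : u ∈ E.carrier) (hu0 : ∀ a, 0 ≤ u a)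
    (husupp : ∀ a, a ∉ Ioc 0 t → u a = 0) {lam : ℝ} (hlam : 0 < lam)
    (hpos : 0 < dst μ u lam) :
    lam * E.norm ((Ioc 0 (dst μ u lam).toReal).indicator (fun _ => (1:ℝ))) ≤ E.norm u := by
  have hfin : dst μ u lam ≠ ⊤ := dst_ne_top hμ hsub ht0 husupp hlam
  set l := (dst μ u lam).toReal with hldef
  have hl0 : 0 < l := ENNReal.toReal_pos hpos.ne' hfin
  have hlt : l ≤ t := ENNReal.toReal_le_of_le_ofReal ht0.le (dst_le_t hμ hsub ht0 husupp hlam)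
  have hLl : ENNReal.ofReal l = dst μ u lam := ENNReal.ofReal_toReal hfin
  set χl : ℝ → ℝ := (Ioc 0 l).indicator (fun _ => (1:ℝ)) with hχld
  have hχl : χl ∈ E.carrier := indicator_mem E hχt hlt
  set f : ℝ → ℝ := lam • χl with hfd
  have hfmem : f ∈ E.carrier := E.smul_mem lam hχl
  set g : ℝ → ℝ := fun a => if lam < u a then lam else 0 with hgd
  have hχlval : ∀ a, (a ∈ Ioc 0 l → χl a = 1) ∧ (a ∉ Ioc 0 l → χl a = 0) := by
    intro a
    exact ⟨fun ha => indicator_of_mem ha _, fun ha => indicator_of_notMem ha _⟩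
  have hdist : ∀ b : ℝ, 0 < b → μ {a | b < |f a|} = μ {a | b < |g a|} := by
    intro b hb
    have hfval : ∀ a, |f a| = lam * χl a := by
      intro a
      rw [hfd, Pi.smul_apply, smul_eq_mul, abs_mul, abs_of_pos hlam]
      congr 1
      by_cases ha : a ∈ Ioc 0 l
      · rw [(hχlval a).1 ha, abs_one]
      · rw [(hχlval a).2 ha, abs_zero]
    by_cases hblam : b < lam
    · have hef : {a | b < |f a|} = Ioc 0 l := by
        ext a
        rw [mem_setOf_eq, hfval]
        by_cases ha : a ∈ Ioc 0 l
        · rw [(hχlval a).1 ha, mul_one]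
          exact iff_of_true hblam ha
        · rw [(hχlval a).2 ha, mul_zero]
          exact iff_of_false (asymm hb) ha
      have heg : {a | b < |g a|} = {a | lam < u a} := by
        ext a
        by_cases ha : lam < u a
        · rw [mem_setOf_eq, mem_setOf_eq, show g a = lam from if_pos ha, abs_of_pos hlam]
          exact iff_of_true hblam ha
        · rw [mem_setOf_eq, mem_setOf_eq, show g a = 0 from if_neg ha, abs_zero]
          exact iff_of_false (asymm hb) ha
      rw [hef, heg, meas_Ioc hμ hsub le_rfl hlt, sub_zero, hLl]
      rfl
    · push_neg at hblam
      have hef : {a | b < |f a|} = ∅ := by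
        ext a
        rw [mem_setOf_eq, hfval]
        simp only [mem_empty_iff_false, iff_false, not_lt]
        have hc1 : χl a ≤ 1 := by
          by_cases ha : a ∈ Ioc 0 l
          · exact le_of_eq ((hχlval a).1 ha)
          · rw [(hχlval a).2 ha]; norm_num
        calc lam * χl a ≤ lam * 1 := mul_le_mul_of_nonneg_left hc1 hlam.le
        _ = lam := mul_one lam
        _ ≤ b := hblam
      have heg : {a | b < |g a|} = ∅ := by
        ext a
        simp only [mem_setOf_eq, mem_empty_iff_false, iff_false, not_lt]
        by_cases ha : lam < u a
        · rw [show g a = lam from if_pos ha, abs_of_pos hlam]; exact hblam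
        · rw [show g a = 0 from if_neg ha, abs_zero]; exact hb.le
      rw [hef, heg]
  obtain ⟨hgmem, hgnorm⟩ := hE f g hfmem hdist
  have hgu : E.norm g ≤ E.norm u := by
    apply E.ideal_norm humem
    apply Filter.Eventually.of_forall
    intro a
    by_cases ha : lam < u a
    · rw [show g a = lam from if_pos ha, abs_of_pos hlam, abs_of_nonneg (hu0 a)]
      exact ha.le
    · rw [show g a = 0 from if_neg ha, abs_zero]
      exact abs_nonneg _
  have hfnorm : E.norm f = lam * E.norm χl := by
    rw [hfd, E.norm_smul, abs_of_pos hlam]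
  rw [← hfnorm, ← hgnorm]
  exact hgu

end level

section pairing

variable {I : Set ℝ} {μ : Measure ℝ} {t : ℝ}

lemma pairing (hμ : μ = volume.restrict I) (hsub : Ioc 0 t ⊆ I) (ht0 : 0 < t)
    {u v : ℝ → ℝ} (hu0 : ∀ a, 0 ≤ u a) (hv0 : ∀ a, 0 ≤ v a)
    (huv : ∀ᵐ a ∂μ, u a * v a = (Ioc 0 t).indicator (fun _ => (1:ℝ)) a)
    (Hbu : ∀ s, 0 < s → s < t → ∃ l, 0 ≤ l ∧ dst μ u l ≤ ENNReal.ofReal s)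
    (Hbv : ∀ s, 0 < s → s < t → ∃ l, 0 ≤ l ∧ dst μ v l ≤ ENNReal.ofReal s)
    {s s' : ℝ} (hs : 0 < s) (hs' : 0 < s') (hss : s + s' < t) :
    1 ≤ rear μ t u s * rear μ t v s' := by
  set P := rear μ t u s with hP
  set Q := rear μ t v s' with hQ
  have hP0 : 0 ≤ P := rear_nonneg Hbu s
  have hQ0 : 0 ≤ Q := rear_nonneg Hbv s'
  by_contra hc
  push_neg at hc
  set δ := min 1 ((1 - P*Q)/(P+Q+2)) with hδd
  have hδ : 0 < δ := lt_min one_pos (div_pos (by linarith) (by linarith))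
  have hδ1 : δ ≤ 1 := min_le_left _ _
  have hδ2 : δ ≤ (1 - P*Q)/(P+Q+2) := min_le_right _ _
  have hαβ : (P+δ)*(Q+δ) < 1 := by
    have h1 : δ*(P+Q+2) ≤ 1 - P*Q := by
      rw [← le_div_iff₀ (by linarith : (0:ℝ) < P+Q+2)]
      exact hδ2
    nlinarith
  have h1 : dst μ u (P+δ) ≤ ENNReal.ofReal s :=
    rear_lt_imp Hbu hs (by linarith) (by linarith)
  have h2 : dst μ v (Q+δ) ≤ ENNReal.ofReal s' :=
    rear_lt_imp Hbv hs' (by linarith) (by linarith)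
  set N := {a : ℝ | ¬ (u a * v a = (Ioc 0 t).indicator (fun _ => (1:ℝ)) a)} with hNd
  have hN : μ N = 0 := huv
  have hcov : Ioc 0 t ⊆ ({a | P+δ < u a} ∪ {a | Q+δ < v a}) ∪ N := by
    intro a ha
    by_cases h3 : u a * v a = (Ioc 0 t).indicator (fun _ => (1:ℝ)) a
    · left
      by_contra h4
      rw [mem_union, mem_setOf_eq, mem_setOf_eq] at h4
      push_neg at h4
      have h5 : u a ≤ P + δ := h4.1
      have h6 : v a ≤ Q + δ := h4.2
      rw [indicator_of_mem ha] at h3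
      have h7 : u a * v a ≤ (P+δ)*(Q+δ) :=
        mul_le_mul h5 h6 (hv0 a) (by linarith)
      rw [h3] at h7
      linarith
    · right
      exact h3
  have hmeas : ENNReal.ofReal t ≤ ENNReal.ofReal s + ENNReal.ofReal s' := by
    calc ENNReal.ofReal t = μ (Ioc 0 t) := by
          rw [meas_Ioc hμ hsub le_rfl le_rfl, sub_zero]
    _ ≤ μ (({a | P+δ < u a} ∪ {a | Q+δ < v a}) ∪ N) := measure_mono hcov
    _ ≤ μ ({a | P+δ < u a} ∪ {a | Q+δ < v a}) + μ N := measure_union_le _ _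
    _ = μ ({a | P+δ < u a} ∪ {a | Q+δ < v a}) := by rw [hN, add_zero]
    _ ≤ μ {a | P+δ < u a} + μ {a | Q+δ < v a} := measure_union_le _ _
    _ ≤ ENNReal.ofReal s + ENNReal.ofReal s' := add_le_add h1 h2
  rw [← ENNReal.ofReal_add hs.le hs'.le] at hmeas
  have := (ENNReal.ofReal_le_ofReal_iff (by linarith)).mp hmeas
  linarith

end pairing

end PF

/-- Theorem 2: the fundamental function of the product of two symmetric spaces on
I = (0,1) or (0,∞) is the product of the fundamental functions:
‖χ_{(0,t]}‖_{E⊙F} = ‖χ_{(0,t]}‖_E · ‖χ_{(0,t]}‖_F. -/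
theorem fundamental_function_of_product (I : Set ℝ)
    (hI : I = Set.Ioo 0 1 ∨ I = Set.Ioi 0) (μ : Measure ℝ)
    (hμ : μ = MeasureTheory.volume.restrict I)
    (E F : IdealSpace μ) (hE : IsSymmetric E) (hF : IsSymmetric F)
    (t : ℝ) (ht : t ∈ I)
    (hEt : (Set.Ioc 0 t).indicator (fun _ => (1 : ℝ)) ∈ E.carrier)
    (hFt : (Set.Ioc 0 t).indicator (fun _ => (1 : ℝ)) ∈ F.carrier) :
    prodNorm E F ((Set.Ioc 0 t).indicator (fun _ => (1 : ℝ))) =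
      E.norm ((Set.Ioc 0 t).indicator (fun _ => (1 : ℝ))) *
        F.norm ((Set.Ioc 0 t).indicator (fun _ => (1 : ℝ))) := by
  classical
  have ht0 : 0 < t := by
    rcases hI with h | h
    · rw [h] at ht; exact ht.1
    · rw [h] at ht; exact ht
  have hsub : Set.Ioc 0 t ⊆ I := by
    rcases hI with h | h
    · rw [h] at ht ⊢
      intro a ha
      exact ⟨ha.1, lt_of_le_of_lt ha.2 ht.2⟩
    · rw [h]
      intro a ha
      exact ha.1
  have hmul : (Set.Ioc 0 t).indicator (fun _ => (1 : ℝ))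
      = (Set.Ioc 0 t).indicator (fun _ => (1 : ℝ)) * (Set.Ioc 0 t).indicator (fun _ => (1 : ℝ)) := by
    funext a
    rw [Pi.mul_apply]
    by_cases ha : a ∈ Set.Ioc 0 t
    · rw [Set.indicator_of_mem ha]; norm_num
    · rw [Set.indicator_of_notMem ha]; norm_num
  have hmem : E.norm ((Set.Ioc 0 t).indicator (fun _ => (1 : ℝ)))
        * F.norm ((Set.Ioc 0 t).indicator (fun _ => (1 : ℝ)))
      ∈ {r | ∃ x ∈ E.carrier, ∃ y ∈ F.carrier,
          (Set.Ioc 0 t).indicator (fun _ => (1 : ℝ)) =ᵐ[μ] x * y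
            ∧ r = E.norm x * F.norm y} := by
    refine ⟨_, hEt, _, hFt, ?_, rfl⟩
    exact Filter.EventuallyEq.of_eq hmul
  have hbdd : BddBelow {r | ∃ x ∈ E.carrier, ∃ y ∈ F.carrier,
      (Set.Ioc 0 t).indicator (fun _ => (1 : ℝ)) =ᵐ[μ] x * y
        ∧ r = E.norm x * F.norm y} := by
    refine ⟨0, ?_⟩
    rintro r ⟨x, hx, y, hy, _, rfl⟩
    exact mul_nonneg (E.norm_nonneg x) (F.norm_nonneg y)
  rw [prodNorm]
  apply le_antisymm
  · exact csInf_le hbdd hmem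
  · apply le_csInf ⟨_, hmem⟩
    rintro r ⟨x, hx, y, hy, hxy, rfl⟩
    -- abbreviations
    set u : ℝ → ℝ := fun a => |x a| * (Set.Ioc 0 t).indicator (fun _ => (1 : ℝ)) a with hu
    set v : ℝ → ℝ := fun a => |y a| * (Set.Ioc 0 t).indicator (fun _ => (1 : ℝ)) a with hv
    have hind01 : ∀ a, 0 ≤ (Set.Ioc 0 t).indicator (fun _ => (1 : ℝ)) a
        ∧ (Set.Ioc 0 t).indicator (fun _ => (1 : ℝ)) a ≤ 1 := by
      intro a
      by_cases ha : a ∈ Set.Ioc 0 t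
      · rw [Set.indicator_of_mem ha]; norm_num
      · rw [Set.indicator_of_notMem ha]; norm_num
    have hu0 : ∀ a, 0 ≤ u a := fun a => mul_nonneg (abs_nonneg _) (hind01 a).1
    have hv0 : ∀ a, 0 ≤ v a := fun a => mul_nonneg (abs_nonneg _) (hind01 a).1
    have huabs : ∀ a, |u a| ≤ |x a| := by
      intro a
      rw [abs_of_nonneg (hu0 a)]
      calc |x a| * (Set.Ioc 0 t).indicator (fun _ => (1 : ℝ)) a ≤ |x a| * 1 :=
            mul_le_mul_of_nonneg_left (hind01 a).2 (abs_nonneg _)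
      _ = |x a| := mul_one _
    have hvabs : ∀ a, |v a| ≤ |y a| := by
      intro a
      rw [abs_of_nonneg (hv0 a)]
      calc |y a| * (Set.Ioc 0 t).indicator (fun _ => (1 : ℝ)) a ≤ |y a| * 1 :=
            mul_le_mul_of_nonneg_left (hind01 a).2 (abs_nonneg _)
      _ = |y a| := mul_one _
    have humem : u ∈ E.carrier := E.ideal_mem hx (Filter.Eventually.of_forall huabs)
    have hvmem : v ∈ F.carrier := F.ideal_mem hy (Filter.Eventually.of_forall hvabs)
    have huN : E.norm u ≤ E.norm x := E.ideal_norm hx (Filter.Eventually.of_forall huabs)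
    have hvN : F.norm v ≤ F.norm y := F.ideal_norm hy (Filter.Eventually.of_forall hvabs)
    have husupp : ∀ a, a ∉ Set.Ioc 0 t → u a = 0 := by
      intro a ha
      show |x a| * (Set.Ioc 0 t).indicator (fun _ => (1 : ℝ)) a = 0
      rw [Set.indicator_of_notMem ha, mul_zero]
    have hvsupp : ∀ a, a ∉ Set.Ioc 0 t → v a = 0 := by
      intro a ha
      show |y a| * (Set.Ioc 0 t).indicator (fun _ => (1 : ℝ)) a = 0
      rw [Set.indicator_of_notMem ha, mul_zero]
    have huv : ∀ᵐ a ∂μ, u a * v a = (Set.Ioc 0 t).indicator (fun _ => (1 : ℝ)) a := by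
      filter_upwards [hxy] with a ha
      show |x a| * (Set.Ioc 0 t).indicator (fun _ => (1 : ℝ)) a
          * (|y a| * (Set.Ioc 0 t).indicator (fun _ => (1 : ℝ)) a)
        = (Set.Ioc 0 t).indicator (fun _ => (1 : ℝ)) a
      by_cases hm : a ∈ Set.Ioc 0 t
      · have h1 : (Set.Ioc 0 t).indicator (fun _ => (1 : ℝ)) a = 1 := Set.indicator_of_mem hm _
        rw [h1, mul_one, mul_one]
        have h2 : x a * y a = 1 := by
          have h3 : (Set.Ioc 0 t).indicator (fun _ => (1 : ℝ)) a = x a * y a := ha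
          rw [h1] at h3
          exact h3.symm
        calc |x a| * |y a| = |x a * y a| := (abs_mul _ _).symm
        _ = |(1:ℝ)| := by rw [h2]
        _ = 1 := abs_one
      · have h1 : (Set.Ioc 0 t).indicator (fun _ => (1 : ℝ)) a = 0 := Set.indicator_of_notMem hm _
        rw [h1]
        ring
    -- contradiction helper for pathological distributions
    have hcontr : ∀ (G : IdealSpace μ), IsSymmetric G →
        (Set.Ioc 0 t).indicator (fun _ => (1:ℝ)) ∈ G.carrier →
        ∀ w : ℝ → ℝ, w ∈ G.carrier → (∀ a, 0 ≤ w a) → (∀ a, a ∉ Set.Ioc 0 t → w a = 0) →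
        ¬ (∀ s, 0 < s → s < t → ∃ l, 0 ≤ l ∧ PF.dst μ w l ≤ ENNReal.ofReal s) → False := by
      intro G hG hχ w hw hw0 hwsupp hnb
      push_neg at hnb
      obtain ⟨s₀, hs₀, hs₀t, hbig⟩ := hnb
      have hmem₀ : (Set.Ioc 0 s₀).indicator (fun _ => (1:ℝ)) ∈ G.carrier :=
        PF.indicator_mem G hχ hs₀t.le
      have hφpos : 0 < G.norm ((Set.Ioc 0 s₀).indicator (fun _ => (1:ℝ))) :=
        PF.phi_pos hμ hsub G hs₀ hs₀t.le hmem₀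
      set lam := (G.norm w + 1) / G.norm ((Set.Ioc 0 s₀).indicator (fun _ => (1:ℝ))) with hlamd
      have hlampos : 0 < lam := div_pos (by linarith [G.norm_nonneg w]) hφpos
      have hdpos : ENNReal.ofReal s₀ < PF.dst μ w lam := hbig lam hlampos.le
      have hpos : 0 < PF.dst μ w lam := lt_of_le_of_lt (zero_le) hdpos
      have hlev := PF.level hμ hsub ht0 G hG hχ hw hw0 hwsupp hlampos hpos
      have hfin : PF.dst μ w lam ≠ ⊤ := PF.dst_ne_top hμ hsub ht0 hwsupp hlampos
      have hs₀le : s₀ ≤ (PF.dst μ w lam).toReal :=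
        (ENNReal.ofReal_le_iff_le_toReal hfin).mp hdpos.le
      have hlt2 : (PF.dst μ w lam).toReal ≤ t :=
        ENNReal.toReal_le_of_le_ofReal ht0.le (PF.dst_le_t hμ hsub ht0 hwsupp hlampos)
      have hmono := PF.indicator_norm_mono G hs₀le (PF.indicator_mem G hχ hlt2)
      have h1 : lam * G.norm ((Set.Ioc 0 s₀).indicator (fun _ => (1:ℝ))) ≤ G.norm w :=
        le_trans (mul_le_mul_of_nonneg_left hmono hlampos.le) hlev
      have h2 : lam * G.norm ((Set.Ioc 0 s₀).indicator (fun _ => (1:ℝ))) = G.norm w + 1 := by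
        rw [hlamd]
        field_simp
      linarith
    by_cases Hbu : ∀ s, 0 < s → s < t → ∃ l, 0 ≤ l ∧ PF.dst μ u l ≤ ENNReal.ofReal s
    swap
    · exact (hcontr E hE hEt u humem hu0 husupp Hbu).elim
    by_cases Hbv : ∀ s, 0 < s → s < t → ∃ l, 0 ≤ l ∧ PF.dst μ v l ≤ ENNReal.ofReal s
    swap
    · exact (hcontr F hF hFt v hvmem hv0 hvsupp Hbv).elim
    -- main case
    obtain ⟨hrumem, hruN⟩ :=
      hE u (PF.rear μ t u) humem (PF.rear_equi hμ hsub ht0 hu0 husupp Hbu)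
    obtain ⟨hrvmem, hrvN⟩ :=
      hF v (PF.rear μ t v) hvmem (PF.rear_equi hμ hsub ht0 hv0 hvsupp Hbv)
    have key : ∀ n : ℕ, 3 ≤ n →
        E.norm ((Set.Ioc 0 t).indicator (fun _ => (1 : ℝ)))
          * F.norm ((Set.Ioc 0 t).indicator (fun _ => (1 : ℝ)))
          * (((n:ℝ) - 2)/(n:ℝ))^2 ≤ E.norm x * F.norm y := by
      intro n hn3
      have hn : 0 < n := by omega
      have hnR : (0:ℝ) < (n:ℝ) := by exact_mod_cast hn
      have hδ : 0 < t / (n:ℝ) := by positivity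
      set cu : ℕ → ℝ := fun i => PF.rear μ t u (((i:ℝ)+1) * (t/(n:ℝ))) with hcud
      set cv : ℕ → ℝ := fun i => PF.rear μ t v (((i:ℝ)+1) * (t/(n:ℝ))) with hcvd
      have hcu0 : ∀ i, 0 ≤ cu i := fun i => PF.rear_nonneg Hbu _
      have hcv0 : ∀ i, 0 ≤ cv i := fun i => PF.rear_nonneg Hbv _
      have hcellub : ∀ i : ℕ, i < n → ((i:ℝ)+1) * (t/(n:ℝ)) ≤ t := by
        intro i hi
        calc ((i:ℝ)+1) * (t/(n:ℝ)) ≤ (n:ℝ) * (t/(n:ℝ)) := by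
              apply mul_le_mul_of_nonneg_right _ hδ.le
              exact_mod_cast Nat.succ_le_of_lt hi
        _ = t := by field_simp
      have hdomu : ∀ a, PF.stepf t n cu a ≤ |PF.rear μ t u a| := by
        intro a
        rw [PF.stepf]
        by_cases ha : a ∈ Set.Ioc 0 t
        · rw [Set.indicator_of_mem ha, abs_of_nonneg (PF.rear_nonneg Hbu a)]
          have hmc := PF.mem_cell ht0 hn ha
          exact PF.rear_anti Hbu ha.1 hmc.2 (hcellub _ (PF.idx_lt ht0 hn ha))
        · rw [Set.indicator_of_notMem ha]
          exact abs_nonneg _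
      have hdomv : ∀ a, PF.stepf t n cv a ≤ |PF.rear μ t v a| := by
        intro a
        rw [PF.stepf]
        by_cases ha : a ∈ Set.Ioc 0 t
        · rw [Set.indicator_of_mem ha, abs_of_nonneg (PF.rear_nonneg Hbv a)]
          have hmc := PF.mem_cell ht0 hn ha
          exact PF.rear_anti Hbv ha.1 hmc.2 (hcellub _ (PF.idx_lt ht0 hn ha))
        · rw [Set.indicator_of_notMem ha]
          exact abs_nonneg _
      have hboundu := PF.cyclic hμ hsub ht0 E hE hEt hrumem cu hcu0 hn hdomu
      have hboundv := PF.cyclic hμ hsub ht0 F hF hFt hrvmem cv hcv0 hn hdomv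
      rw [hruN] at hboundu
      rw [hrvN] at hboundv
      have hboundu2 : E.norm ((Set.Ioc 0 t).indicator (fun _ => (1 : ℝ)))
          * (∑ i ∈ Finset.range n, cu i) ≤ (n:ℝ) * E.norm x :=
        le_trans hboundu (mul_le_mul_of_nonneg_left huN hnR.le)
      have hboundv2 : F.norm ((Set.Ioc 0 t).indicator (fun _ => (1 : ℝ)))
          * (∑ i ∈ Finset.range n, cv i) ≤ (n:ℝ) * F.norm y :=
        le_trans hboundv (mul_le_mul_of_nonneg_left hvN hnR.le)
      set m := n - 2 with hmd
      have hmn : m ≤ n := by omega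
      have hmR : ((m:ℕ):ℝ) = (n:ℝ) - 2 := by
        rw [hmd, Nat.cast_sub (by omega : 2 ≤ n)]
        norm_num
      have hpair : ∀ i ∈ Finset.range m, 1 ≤ cu i * cv (m - 1 - i) := by
        intro i hi
        have him : i < m := Finset.mem_range.mp hi
        apply PF.pairing hμ hsub ht0 hu0 hv0 huv Hbu Hbv
        · positivity
        · positivity
        · have hj : (i + 1) + ((m - 1 - i) + 1) = n - 1 := by omega
          have hcalc : ((i:ℝ)+1) * (t/(n:ℝ)) + (((m-1-i : ℕ):ℝ)+1) * (t/(n:ℝ))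
              = (((n-1 : ℕ)):ℝ) * (t/(n:ℝ)) := by
            rw [← add_mul]
            congr 1
            exact_mod_cast congrArg (fun k : ℕ => (k:ℝ)) hj
          rw [hcalc]
          have hn1 : ((n-1:ℕ):ℝ) < (n:ℝ) := by
            exact_mod_cast Nat.sub_lt hn one_pos
          calc ((n-1:ℕ):ℝ) * (t/(n:ℝ)) < (n:ℝ) * (t/(n:ℝ)) :=
                mul_lt_mul_of_pos_right hn1 hδ
          _ = t := by field_simp
      have hcs : ((m:ℕ):ℝ)^2 ≤ (∑ i ∈ Finset.range m, cu i)
          * (∑ i ∈ Finset.range m, cv (m-1-i)) := by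
        have h1 : ((m:ℕ):ℝ) ≤ ∑ i ∈ Finset.range m, Real.sqrt (cu i) * Real.sqrt (cv (m-1-i)) := by
          have hterm : ∀ i ∈ Finset.range m,
              (1:ℝ) ≤ Real.sqrt (cu i) * Real.sqrt (cv (m-1-i)) := by
            intro i hi
            rw [← Real.sqrt_mul (hcu0 i)]
            exact Real.one_le_sqrt.mpr (hpair i hi)
          calc ((m:ℕ):ℝ) = ∑ _i ∈ Finset.range m, (1:ℝ) := by
                rw [Finset.sum_const, Finset.card_range, nsmul_eq_mul, mul_one]
          _ ≤ _ := Finset.sum_le_sum hterm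
        have h2 := Finset.sum_mul_sq_le_sq_mul_sq (Finset.range m)
          (fun i => Real.sqrt (cu i)) (fun i => Real.sqrt (cv (m-1-i)))
        have h3 : ∀ i ∈ Finset.range m, Real.sqrt (cu i) ^ 2 = cu i :=
          fun i _ => Real.sq_sqrt (hcu0 i)
        have h4 : ∀ i ∈ Finset.range m, Real.sqrt (cv (m-1-i)) ^ 2 = cv (m-1-i) :=
          fun i _ => Real.sq_sqrt (hcv0 _)
        rw [Finset.sum_congr rfl h3, Finset.sum_congr rfl h4] at h2
        calc ((m:ℕ):ℝ)^2
            ≤ (∑ i ∈ Finset.range m, Real.sqrt (cu i) * Real.sqrt (cv (m-1-i)))^2 := by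
              apply pow_le_pow_left₀ (by positivity) h1
        _ ≤ _ := h2
      have hrefl : ∑ i ∈ Finset.range m, cv (m-1-i) = ∑ i ∈ Finset.range m, cv i :=
        Finset.sum_range_reflect (fun i => cv i) m
      rw [hrefl] at hcs
      have hsubs : ∀ (c : ℕ → ℝ), (∀ i, 0 ≤ c i) →
          ∑ i ∈ Finset.range m, c i ≤ ∑ i ∈ Finset.range n, c i := by
        intro c hc
        apply Finset.sum_le_sum_of_subset_of_nonneg (Finset.range_subset_range.mpr hmn)
        intro i _ _
        exact hc i
      have e1 : E.norm ((Set.Ioc 0 t).indicator (fun _ => (1 : ℝ)))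
          * (∑ i ∈ Finset.range m, cu i) ≤ (n:ℝ) * E.norm x :=
        le_trans (mul_le_mul_of_nonneg_left (hsubs cu hcu0) (E.norm_nonneg _)) hboundu2
      have e2 : F.norm ((Set.Ioc 0 t).indicator (fun _ => (1 : ℝ)))
          * (∑ i ∈ Finset.range m, cv i) ≤ (n:ℝ) * F.norm y :=
        le_trans (mul_le_mul_of_nonneg_left (hsubs cv hcv0) (F.norm_nonneg _)) hboundv2
      have e3 : 0 ≤ F.norm ((Set.Ioc 0 t).indicator (fun _ => (1 : ℝ)))
          * (∑ i ∈ Finset.range m, cv i) :=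
        mul_nonneg (F.norm_nonneg _) (Finset.sum_nonneg (fun i _ => hcv0 i))
      have e4 : (0:ℝ) ≤ (n:ℝ) * E.norm x := mul_nonneg hnR.le (E.norm_nonneg x)
      have hmain : E.norm ((Set.Ioc 0 t).indicator (fun _ => (1 : ℝ)))
            * F.norm ((Set.Ioc 0 t).indicator (fun _ => (1 : ℝ))) * ((m:ℕ):ℝ)^2
          ≤ ((n:ℝ) * E.norm x) * ((n:ℝ) * F.norm y) := by
        have e5 := mul_le_mul e1 e2 e3 e4
        calc E.norm ((Set.Ioc 0 t).indicator (fun _ => (1 : ℝ)))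
              * F.norm ((Set.Ioc 0 t).indicator (fun _ => (1 : ℝ))) * ((m:ℕ):ℝ)^2
            ≤ E.norm ((Set.Ioc 0 t).indicator (fun _ => (1 : ℝ)))
              * F.norm ((Set.Ioc 0 t).indicator (fun _ => (1 : ℝ)))
              * ((∑ i ∈ Finset.range m, cu i) * (∑ i ∈ Finset.range m, cv i)) := by
              apply mul_le_mul_of_nonneg_left hcs
              exact mul_nonneg (E.norm_nonneg _) (F.norm_nonneg _)
        _ = (E.norm ((Set.Ioc 0 t).indicator (fun _ => (1 : ℝ)))
              * (∑ i ∈ Finset.range m, cu i))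
            * (F.norm ((Set.Ioc 0 t).indicator (fun _ => (1 : ℝ)))
              * (∑ i ∈ Finset.range m, cv i)) := by ring
        _ ≤ ((n:ℝ) * E.norm x) * ((n:ℝ) * F.norm y) := e5
      rw [← hmR]
      have hn2 : (0:ℝ) < (n:ℝ)^2 := by positivity
      rw [div_pow, ← mul_div_assoc, div_le_iff₀ hn2]
      nlinarith [hmain]
    have hlim : Filter.Tendsto
        (fun n : ℕ => E.norm ((Set.Ioc 0 t).indicator (fun _ => (1 : ℝ)))
          * F.norm ((Set.Ioc 0 t).indicator (fun _ => (1 : ℝ)))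
          * (((n:ℝ) - 2)/(n:ℝ))^2) Filter.atTop
        (nhds (E.norm ((Set.Ioc 0 t).indicator (fun _ => (1 : ℝ)))
          * F.norm ((Set.Ioc 0 t).indicator (fun _ => (1 : ℝ))))) := by
      have h1 : Filter.Tendsto (fun n : ℕ => ((n:ℝ) - 2)/(n:ℝ)) Filter.atTop (nhds 1) := by
        have h2 : (fun n : ℕ => ((n:ℝ) - 2)/(n:ℝ)) =ᶠ[Filter.atTop]
            (fun n : ℕ => 1 - 2/(n:ℝ)) := by
          filter_upwards [Filter.eventually_gt_atTop 0] with n hn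
          have hne : (n:ℝ) ≠ 0 := Nat.cast_ne_zero.mpr hn.ne'
          field_simp
        rw [Filter.tendsto_congr' h2]
        have h3 : Filter.Tendsto (fun n : ℕ => 2/(n:ℝ)) Filter.atTop (nhds 0) :=
          tendsto_const_div_atTop_nhds_zero_nat 2
        have h4 := (tendsto_const_nhds (x := (1:ℝ)) (f := Filter.atTop (α := ℕ))).sub h3
        simpa using h4
      have h5 := (h1.pow 2).const_mul
        (E.norm ((Set.Ioc 0 t).indicator (fun _ => (1 : ℝ)))
          * F.norm ((Set.Ioc 0 t).indicator (fun _ => (1 : ℝ))))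
      simpa using h5
    exact le_of_tendsto hlim (Filter.eventually_atTop.mpr ⟨3, key⟩)
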